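/- Let B be a real symmetric positive semidefinite n×n matrix with eigenvalues μ₁ ≥ μ₂ ≥ … ≥ μ_n (with multiplicity), and let 1 ≤ p ≤ n. Then the maximum of trace(Π B) over all rank-p orthogonal projectors Π equals μ₁ + μ₂ + … + μ_p, and a rank-p orthogonal projector Π attains this maximum if and only if there exists an orthogonal matrix H with Hᵀ B H = diag(μ₁, …, μ_n) such that Π = H diag(I_p, 0_{n−p}) Hᵀ; that is, the maximizers are exactly the orthogonal projectors onto dominant p-dimensional eigenspaces of B. -/

import Mathlib

open Matrix

section Helpers
variable {n : ℕ}

lemma conj_cancel {α : Type*} [Fintype α] [DecidableEq α] {V M : Matrix α α ℝ}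
    (h : star V * V = 1) : star V * (V * M * star V) * V = M := by
  rw [show star V * (V * M * star V) * V = (star V * V) * M * (star V * V) from by
    simp only [mul_assoc], h, one_mul, mul_one]

/-- sum of a 0/1 valued function equals cardinality of its support. -/
lemma sum01_eq_card {α : Type*} [Fintype α] [DecidableEq α] (f : α → ℝ)
    (h : ∀ x, f x = 0 ∨ f x = 1) :
    ∑ x, f x = ((Finset.univ.filter fun x => f x = 1).card : ℝ) := by
  classical
  rw [← Finset.sum_boole]
  refine Finset.sum_congr rfl fun x _ => ?_
  rcases h x with h0 | h1
  · simp [h0, (by rw [h0]; norm_num : ¬ f x = 1)]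
  · simp [h1]

lemma trace_submatrix_equiv' {α β : Type*} [Fintype α] [Fintype β]
    (M : Matrix α α ℝ) (e : β ≃ α) : (M.submatrix e e).trace = M.trace := by
  simpa [Matrix.trace, Matrix.diag] using Fintype.sum_equiv e (fun i => M (e i) (e i)) (fun j => M j j) (fun _ => rfl)

lemma trace_fromBlocks' {α β : Type*} [Fintype α] [Fintype β]
    (A : Matrix α α ℝ) (B : Matrix α β ℝ) (C : Matrix β α ℝ) (D : Matrix β β ℝ) :
    (fromBlocks A B C D).trace = A.trace + D.trace := by
  simp [Matrix.trace, Matrix.diag, Fintype.sum_sum_type, fromBlocks]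

lemma submatrix_equiv_injective {α β : Type*} (e : β ≃ α)
    {M N : Matrix β β ℝ} (h : M.submatrix e.symm e.symm = N.submatrix e.symm e.symm) :
    M = N := by
  have := congrArg (fun X : Matrix α α ℝ => X.submatrix e e) h
  simpa [Matrix.submatrix_submatrix, Equiv.symm_comp_self] using this

/-- trace of symmetric idempotent equals its rank. -/
lemma trace_eq_rank_of_projector (P : Matrix (Fin n) (Fin n) ℝ)
    (hsym : Pᵀ = P) (hidem : P * P = P) : P.trace = (P.rank : ℝ) := by
  classical
  have hH : P.IsHermitian := by rwa [Matrix.IsHermitian, conjTranspose_eq_transpose_of_trivial]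
  have hspec := hH.spectral_theorem
  rw [RCLike.ofReal_real_eq_id] at hspec
  simp only [Function.id_comp] at hspec
  set V : Matrix (Fin n) (Fin n) ℝ := ↑(hH.eigenvectorUnitary) with hV
  have hVs : star V * V = 1 := Matrix.mem_unitaryGroup_iff'.mp hH.eigenvectorUnitary.2
  have hVs' : V * star V = 1 := Matrix.mem_unitaryGroup_iff.mp hH.eigenvectorUnitary.2
  have hdiag : star V * P * V = Matrix.diagonal hH.eigenvalues := by
    conv_lhs => rw [hspec]
    exact conj_cancel hVs
  have h01 : ∀ i, hH.eigenvalues i = 0 ∨ hH.eigenvalues i = 1 := by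
    intro i
    have hd2 : Matrix.diagonal hH.eigenvalues * Matrix.diagonal hH.eigenvalues
        = Matrix.diagonal hH.eigenvalues := by
      rw [← hdiag]
      rw [show star V * P * V * (star V * P * V) = star V * (P * ((V * star V) * P)) * V by
        simp only [mul_assoc], hVs', one_mul, hidem]
    rw [Matrix.diagonal_mul_diagonal] at hd2
    have h2 : hH.eigenvalues i * hH.eigenvalues i = hH.eigenvalues i := by
      have := congrFun (congrFun hd2 i) i
      simpa [Matrix.diagonal_apply_eq] using this
    have h3 : hH.eigenvalues i * (hH.eigenvalues i - 1) = 0 := by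
      rw [mul_sub, mul_one, h2, sub_self]
    rcases mul_eq_zero.mp h3 with h | h
    · exact Or.inl h
    · exact Or.inr (by linarith)
  have htr : P.trace = ∑ i, hH.eigenvalues i := by
    conv_lhs => rw [hspec]
    rw [Unitary.conjStarAlgAut_apply, ← hV, Matrix.trace_mul_comm, ← mul_assoc, hVs, one_mul, Matrix.trace_diagonal]
  have hrank : P.rank = (Finset.univ.filter fun i => hH.eigenvalues i = 1).card := by
    rw [hH.rank_eq_card_non_zero_eigs, Fintype.card_subtype]
    congr 1
    apply Finset.filter_congr
    intro i _
    rcases h01 i with h | h <;> simp [h]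
  rw [htr, hrank, sum01_eq_card _ h01]

end Helpers

/-- spectral decomposition of a real symmetric idempotent with 0/1 eigenvalues. -/
lemma projector_spectral {α : Type*} [Fintype α] [DecidableEq α]
    (A : Matrix α α ℝ) (hsym : Aᵀ = A) (hidem : A * A = A) :
    ∃ (V : Matrix α α ℝ) (e : α → ℝ), Vᵀ * V = 1 ∧ (∀ i, e i = 0 ∨ e i = 1) ∧
      A = V * Matrix.diagonal e * Vᵀ ∧ A.trace = ∑ i, e i := by
  classical
  have hH : A.IsHermitian := by rwa [Matrix.IsHermitian, conjTranspose_eq_transpose_of_trivial]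
  have hspec := hH.spectral_theorem
  rw [RCLike.ofReal_real_eq_id] at hspec
  simp only [Function.id_comp] at hspec
  set V : Matrix α α ℝ := ↑(hH.eigenvectorUnitary) with hV
  have hstar : star V = Vᵀ := by
    rw [Matrix.star_eq_conjTranspose, conjTranspose_eq_transpose_of_trivial]
  have hVs : Vᵀ * V = 1 := by
    rw [← hstar]; exact Matrix.mem_unitaryGroup_iff'.mp hH.eigenvectorUnitary.2
  rw [Unitary.conjStarAlgAut_apply, ← hV, hstar] at hspec
  have hdiag : Vᵀ * A * V = Matrix.diagonal hH.eigenvalues := by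
    conv_lhs => rw [hspec]
    rw [show Vᵀ * (V * Matrix.diagonal hH.eigenvalues * Vᵀ) * V
      = (Vᵀ * V) * Matrix.diagonal hH.eigenvalues * (Vᵀ * V) from by simp only [mul_assoc],
      hVs, one_mul, mul_one]
  have hVs' : V * Vᵀ = 1 := mul_eq_one_comm.mp hVs
  refine ⟨V, hH.eigenvalues, hVs, ?_, hspec, ?_⟩
  · intro i
    have hd2 : Matrix.diagonal hH.eigenvalues * Matrix.diagonal hH.eigenvalues
        = Matrix.diagonal hH.eigenvalues := by
      rw [← hdiag,
        show Vᵀ * A * V * (Vᵀ * A * V) = Vᵀ * (A * ((V * Vᵀ) * A)) * V from by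
          simp only [mul_assoc], hVs', one_mul, hidem]
    rw [Matrix.diagonal_mul_diagonal] at hd2
    have h2 : hH.eigenvalues i * hH.eigenvalues i = hH.eigenvalues i := by
      have := congrFun (congrFun hd2 i) i
      simpa [Matrix.diagonal_apply_eq] using this
    have h3 : hH.eigenvalues i * (hH.eigenvalues i - 1) = 0 := by
      rw [mul_sub, mul_one, h2, sub_self]
    rcases mul_eq_zero.mp h3 with h | h
    · exact Or.inl h
    · exact Or.inr (by linarith)
  · conv_lhs => rw [hspec]
    rw [Matrix.trace_mul_comm, ← mul_assoc, hVs, one_mul, Matrix.trace_diagonal]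

lemma sum01_eq_card' {α : Type*} [Fintype α] [DecidableEq α] (f : α → ℝ)
    (h : ∀ x, f x = 0 ∨ f x = 1) :
    ∑ x, f x = ((Finset.univ.filter fun x => f x = 1).card : ℝ) := by
  classical
  rw [← Finset.sum_boole]
  refine Finset.sum_congr rfl fun x _ => ?_
  rcases h x with h0 | h1
  · simp [h0, (by rw [h0]; norm_num : ¬ f x = 1)]
  · simp [h1]

/-- given two 0/1 vectors with equal sums, a permutation matching them exists. -/
lemma exists_perm_of_sum_eq {α : Type*} [Fintype α] [DecidableEq α]
    (e c : α → ℝ) (he : ∀ x, e x = 0 ∨ e x = 1) (hc : ∀ x, c x = 0 ∨ c x = 1)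
    (hsum : ∑ x, e x = ∑ x, c x) :
    ∃ σ : Equiv.Perm α, ∀ x, e (σ x) = c x := by
  classical
  have hcard : (Finset.univ.filter fun x => c x = 1).card
      = (Finset.univ.filter fun x => e x = 1).card := by
    have := hsum
    rw [sum01_eq_card' e he, sum01_eq_card' c hc] at this
    exact_mod_cast this.symm
  have h1 : Fintype.card {x // c x = 1} = Fintype.card {x // e x = 1} := by
    rw [Fintype.card_subtype, Fintype.card_subtype, hcard]
  have h0 : Fintype.card {x // ¬ c x = 1} = Fintype.card {x // ¬ e x = 1} := by
    rw [Fintype.card_subtype_compl, Fintype.card_subtype_compl, h1]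
  refine ⟨Equiv.subtypeCongr (Fintype.equivOfCardEq h1) (Fintype.equivOfCardEq h0), fun x => ?_⟩
  by_cases hx : c x = 1
  · have : Equiv.subtypeCongr (Fintype.equivOfCardEq h1) (Fintype.equivOfCardEq h0) x
        = ↑(Fintype.equivOfCardEq h1 ⟨x, hx⟩) := by
      simp [Equiv.subtypeCongr, Equiv.sumCompl, hx]
    rw [this, (Fintype.equivOfCardEq h1 ⟨x, hx⟩).2, hx]
  · have : Equiv.subtypeCongr (Fintype.equivOfCardEq h1) (Fintype.equivOfCardEq h0) x
        = ↑(Fintype.equivOfCardEq h0 ⟨x, hx⟩) := by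
      simp [Equiv.subtypeCongr, Equiv.sumCompl, hx]
    have h2 := (Fintype.equivOfCardEq h0 ⟨x, hx⟩).2
    rw [this]
    rcases he ↑(Fintype.equivOfCardEq h0 ⟨x, hx⟩) with h | h
    · rw [h]
      rcases hc x with h' | h'
      · rw [h']
      · exact absurd h' hx
    · exact absurd h h2











/-- a symmetric idempotent agreeing with `diagonal cv` outside the `μ = lam` block is an
orthogonal conjugate of `diagonal cv` by a `diagonal μ`-preserving orthogonal matrix. -/
lemma exists_orthogonal_conj {n : ℕ} (μ : Fin n → ℝ) (lam : ℝ) (cv : Fin n → ℝ)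
    (hcv : ∀ i, cv i = 0 ∨ cv i = 1)
    (P : Matrix (Fin n) (Fin n) ℝ) (hsym : Pᵀ = P) (hidem : P * P = P)
    (hcross : ∀ i j, (μ i ≠ lam ∨ μ j ≠ lam) → P i j = Matrix.diagonal cv i j)
    (htr : P.trace = (Matrix.diagonal cv).trace) :
    ∃ U : Matrix (Fin n) (Fin n) ℝ, Uᵀ * U = 1 ∧
      Uᵀ * Matrix.diagonal μ * U = Matrix.diagonal μ ∧
      P = U * Matrix.diagonal cv * Uᵀ := by
  classical
  set pr : Fin n → Prop := fun i => μ i = lam with hpr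
  set E : {i // pr i} ⊕ {i // ¬ pr i} ≃ Fin n := Equiv.sumCompl pr with hE
  set A₁ : Matrix {i // pr i} {i // pr i} ℝ :=
    P.submatrix Subtype.val Subtype.val with hA₁
  set c₁ : {i // pr i} → ℝ := fun x => cv x with hc₁
  set c₂ : {i // ¬ pr i} → ℝ := fun x => cv x with hc₂
  set μ₂ : {i // ¬ pr i} → ℝ := fun x => μ x with hμ₂
  have hEpos : ∀ (i : Fin n) (h : pr i), E.symm i = Sum.inl ⟨i, h⟩ := by
    intro i h; simp only [hE, Equiv.sumCompl, Equiv.coe_fn_symm_mk]; exact dif_pos h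
  have hEneg : ∀ (i : Fin n) (h : ¬ pr i), E.symm i = Sum.inr ⟨i, h⟩ := by
    intro i h; simp only [hE, Equiv.sumCompl, Equiv.coe_fn_symm_mk]; exact dif_neg h
  -- block decompositions
  have hPblock : P = (fromBlocks A₁ 0 0 (Matrix.diagonal c₂)).submatrix E.symm E.symm := by
    ext i j
    rw [Matrix.submatrix_apply]
    by_cases hi : pr i <;> by_cases hj : pr j
    · rw [hEpos i hi, hEpos j hj]; rfl
    · rw [hEpos i hi, hEneg j hj]
      have hij : i ≠ j := fun h => hj (h ▸ hi)
      rw [hcross i j (Or.inr hj), Matrix.diagonal_apply_ne _ hij]; rfl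
    · rw [hEneg i hi, hEpos j hj]
      have hij : i ≠ j := fun h => hi (h ▸ hj)
      rw [hcross i j (Or.inl hi), Matrix.diagonal_apply_ne _ hij]; rfl
    · rw [hEneg i hi, hEneg j hj]
      rw [hcross i j (Or.inl hi)]
      show Matrix.diagonal cv i j = Matrix.diagonal c₂ ⟨i, hi⟩ ⟨j, hj⟩
      by_cases hij : i = j
      · subst hij; rw [Matrix.diagonal_apply_eq, Matrix.diagonal_apply_eq]
      · rw [Matrix.diagonal_apply_ne _ hij,
          Matrix.diagonal_apply_ne _ (fun h => hij (Subtype.ext_iff.mp h))]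
  have hDblock : Matrix.diagonal cv
      = (fromBlocks (Matrix.diagonal c₁) 0 0 (Matrix.diagonal c₂)).submatrix E.symm E.symm := by
    have hfun : (Sum.elim c₁ c₂ ∘ ⇑E.symm) = cv := by
      funext i
      by_cases hi : pr i
      · rw [Function.comp_apply, hEpos i hi]; rfl
      · rw [Function.comp_apply, hEneg i hi]; rfl
    rw [Matrix.fromBlocks_diagonal, Matrix.submatrix_diagonal_equiv, hfun]
  have hMblock : Matrix.diagonal μ
      = (fromBlocks (Matrix.diagonal (fun _ : {i // pr i} => lam)) 0 0
          (Matrix.diagonal μ₂)).submatrix E.symm E.symm := by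
    have hfun : (Sum.elim (fun _ : {i // pr i} => lam) μ₂ ∘ ⇑E.symm) = μ := by
      funext i
      by_cases hi : pr i
      · rw [Function.comp_apply, hEpos i hi]; exact hi.symm
      · rw [Function.comp_apply, hEneg i hi]; rfl
    rw [Matrix.fromBlocks_diagonal, Matrix.submatrix_diagonal_equiv, hfun]
  -- A₁ is a symmetric idempotent
  have hA₁sym : A₁ᵀ = A₁ := by
    ext x y
    have := congrFun (congrFun hsym x.val) y.val
    simpa [Matrix.transpose_apply, hA₁] using this
  have hA₁idem : A₁ * A₁ = A₁ := by
    have h2 := hidem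
    rw [hPblock, Matrix.submatrix_mul_equiv] at h2
    have h3 := submatrix_equiv_injective E h2
    rw [Matrix.fromBlocks_multiply] at h3
    have h4 := congrArg Matrix.toBlocks₁₁ h3
    simpa [Matrix.toBlocks_fromBlocks₁₁] using h4
  have htrA₁ : A₁.trace = (Matrix.diagonal c₁).trace := by
    have h := htr
    rw [hPblock, hDblock, trace_submatrix_equiv', trace_submatrix_equiv',
      trace_fromBlocks', trace_fromBlocks'] at h
    linarith
  -- spectral decomposition of A₁ and a matching permutation
  obtain ⟨V, ev, hVo, hev01, hVspec, hVtr⟩ := projector_spectral A₁ hA₁sym hA₁idem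
  have hc₁01 : ∀ x, c₁ x = 0 ∨ c₁ x = 1 := fun x => hcv x
  obtain ⟨σ, hσ⟩ := exists_perm_of_sum_eq ev c₁ hev01 hc₁01
    (by rw [← hVtr, htrA₁, Matrix.trace_diagonal])
  set W : Matrix {i // pr i} {i // pr i} ℝ := V.submatrix id ⇑σ with hW
  have hVo' : ∀ a b, ∑ k, V k a * V k b = if a = b then (1:ℝ) else 0 := by
    intro a b
    have := congrFun (congrFun hVo a) b
    simpa [Matrix.mul_apply, Matrix.one_apply] using this
  have hWo : Wᵀ * W = 1 := by
    ext x y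
    simp only [Matrix.mul_apply, Matrix.transpose_apply, hW, Matrix.submatrix_apply, id_eq]
    rw [hVo' (σ x) (σ y)]
    simp [Matrix.one_apply, EmbeddingLike.apply_eq_iff_eq]
  have hWo' : W * Wᵀ = 1 := mul_eq_one_comm.mp hWo
  have hdc : Matrix.diagonal c₁ = (Matrix.diagonal ev).submatrix ⇑σ ⇑σ := by
    have h5 : ev ∘ ⇑σ = c₁ := funext hσ
    rw [Matrix.submatrix_diagonal_equiv, h5]
  have hWd : W * Matrix.diagonal c₁ * Wᵀ = A₁ := by
    rw [hW, hdc, Matrix.transpose_submatrix, Matrix.submatrix_mul_equiv,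
      Matrix.submatrix_mul_equiv, Matrix.submatrix_id_id]
    exact hVspec.symm
  have hWl : Wᵀ * Matrix.diagonal (fun _ : {i // pr i} => lam) * W
      = Matrix.diagonal (fun _ : {i // pr i} => lam) := by
    have hdl : Matrix.diagonal (fun _ : {i // pr i} => lam)
        = lam • (1 : Matrix {i // pr i} {i // pr i} ℝ) := by
      ext i j
      by_cases h : i = j <;> simp [h]
    rw [hdl, mul_smul_comm, mul_one, smul_mul_assoc, hWo]
  -- assemble U
  set U' : Matrix ({i // pr i} ⊕ {i // ¬ pr i}) ({i // pr i} ⊕ {i // ¬ pr i}) ℝ :=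
    fromBlocks W 0 0 1 with hU'
  set U : Matrix (Fin n) (Fin n) ℝ := U'.submatrix E.symm E.symm with hUdef
  have hUt : Uᵀ = (U'ᵀ).submatrix E.symm E.symm := by
    rw [hUdef, Matrix.transpose_submatrix]
  have hU'o : U'ᵀ * U' = 1 := by
    rw [hU', Matrix.fromBlocks_transpose, Matrix.fromBlocks_multiply]
    simp [hWo, Matrix.fromBlocks_one]
  refine ⟨U, ?_, ?_, ?_⟩
  · rw [hUt, hUdef, Matrix.submatrix_mul_equiv, hU'o, Matrix.submatrix_one_equiv]
  · rw [hMblock, hUt, hUdef, Matrix.submatrix_mul_equiv, Matrix.submatrix_mul_equiv]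
    congr 1
    rw [hU', Matrix.fromBlocks_transpose, Matrix.fromBlocks_multiply,
      Matrix.fromBlocks_multiply]
    simp only [Matrix.mul_zero, Matrix.zero_mul, Matrix.mul_one, Matrix.one_mul,
      add_zero, zero_add, Matrix.transpose_zero, Matrix.transpose_one]
    rw [hWl]

  · rw [hDblock, hUt, hUdef, Matrix.submatrix_mul_equiv, Matrix.submatrix_mul_equiv, hPblock]
    congr 1
    rw [hU', Matrix.fromBlocks_transpose, Matrix.fromBlocks_multiply,
      Matrix.fromBlocks_multiply]
    simp only [Matrix.mul_zero, Matrix.zero_mul, Matrix.mul_one, Matrix.one_mul,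
      add_zero, zero_add, Matrix.transpose_zero, Matrix.transpose_one]
    rw [hWd]

lemma card_lt_p {n p : ℕ} (hpn : p ≤ n) :
    (Finset.univ.filter fun i : Fin n => (i : ℕ) < p).card = p := by
  rw [← Fintype.card_subtype]
  have e : {i : Fin n // (i : ℕ) < p} ≃ Fin p :=
    { toFun := fun x => ⟨x.1, x.2⟩
      invFun := fun y => ⟨⟨y.1, lt_of_lt_of_le y.2 hpn⟩, y.2⟩
      left_inv := fun x => rfl
      right_inv := fun y => rfl }
  rw [Fintype.card_congr e, Fintype.card_fin]

lemma weight_ineq {n p : ℕ} (hp : 1 ≤ p) (hpn : p ≤ n) (μ : Fin n → ℝ) (hμ : Antitone μ)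
    (d : Fin n → ℝ) (h0 : ∀ i, 0 ≤ d i) (h1 : ∀ i, d i ≤ 1) (hsum : ∑ i, d i = p) :
    ∑ i : Fin n, d i * μ i ≤ ∑ i : Fin n, (if (i : ℕ) < p then (1:ℝ) else 0) * μ i ∧
    (∑ i : Fin n, d i * μ i = ∑ i : Fin n, (if (i : ℕ) < p then (1:ℝ) else 0) * μ i →
      ∀ i, (d i - (if (i : ℕ) < p then (1:ℝ) else 0)) * (μ i - μ ⟨p - 1, by omega⟩) = 0) := by
  classical
  set c : Fin n → ℝ := fun i => if (i : ℕ) < p then (1:ℝ) else 0 with hc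
  set lam : ℝ := μ ⟨p - 1, by omega⟩ with hlam
  have hc_sum : ∑ i, c i = (p : ℝ) := by
    rw [hc]
    rw [Finset.sum_boole, card_lt_p hpn]
  have hterm : ∀ i : Fin n, (d i - c i) * (μ i - lam) ≤ 0 := by
    intro i
    by_cases hi : (i : ℕ) < p
    · have hci : c i = 1 := by rw [hc]; simp [hi]
      have hle : lam ≤ μ i := by
        apply hμ
        rw [Fin.le_def]
        simp only []
        omega
      rw [hci]
      exact mul_nonpos_iff.mpr (Or.inr ⟨by linarith [h1 i], by linarith⟩)
    · have hci : c i = 0 := by rw [hc]; simp [hi]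
      have hle : μ i ≤ lam := by
        apply hμ
        rw [Fin.le_def]
        simp only []
        omega
      rw [hci]
      exact mul_nonpos_iff.mpr (Or.inl ⟨by linarith [h0 i], by linarith⟩)
  have hkey : ∑ i, (d i - c i) * (μ i - lam)
      = ∑ i, d i * μ i - ∑ i, c i * μ i := by
    have expand : ∀ i : Fin n, (d i - c i) * (μ i - lam)
        = d i * μ i - c i * μ i - (d i - c i) * lam := by intro i; ring
    rw [Finset.sum_congr rfl fun i _ => expand i]
    rw [Finset.sum_sub_distrib, Finset.sum_sub_distrib, ← Finset.sum_mul,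
      Finset.sum_sub_distrib, hsum, hc_sum]
    ring
  constructor
  · have := Finset.sum_nonpos (s := Finset.univ) (fun i _ => hterm i)
    rw [hkey] at this
    linarith
  · intro heq i
    have hzero : ∑ i, (d i - c i) * (μ i - lam) = 0 := by rw [hkey]; linarith
    have := (Finset.sum_eq_zero_iff_of_nonpos (fun i _ => hterm i)).mp hzero
    exact this i (Finset.mem_univ i)

/-- diagonal entries of a symmetric idempotent. -/
lemma projector_diag {n : ℕ} (P : Matrix (Fin n) (Fin n) ℝ)
    (hsym : Pᵀ = P) (hidem : P * P = P) :
    (∀ i, P i i = ∑ j, P i j * P i j) ∧ (∀ i, 0 ≤ P i i) ∧ (∀ i, P i i ≤ 1) ∧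
    (∀ i, P i i = 1 → ∀ j, j ≠ i → P i j = 0) ∧
    (∀ i, P i i = 0 → ∀ j, P i j = 0) := by
  have hPsq : ∀ i, P i i = ∑ j, P i j * P i j := by
    intro i
    conv_lhs => rw [← hidem]
    rw [Matrix.mul_apply]
    refine Finset.sum_congr rfl fun j _ => ?_
    have : P j i = P i j := by
      conv_lhs => rw [← hsym]
      rfl
    rw [this]
  have h0 : ∀ i, 0 ≤ P i i := fun i => by
    rw [hPsq i]; exact Finset.sum_nonneg fun j _ => mul_self_nonneg _
  have hsplit : ∀ i, P i i = P i i * P i i + ∑ j ∈ Finset.univ.erase i, P i j * P i j := by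
    intro i
    conv_lhs => rw [hPsq i]
    rw [← Finset.add_sum_erase _ _ (Finset.mem_univ i)]
  have herase0 : ∀ i, P i i = 1 ∨ P i i = 0 →
      ∀ j, j ≠ i → P i j = 0 := by
    intro i hcase j hj
    have h2 : ∑ j ∈ Finset.univ.erase i, P i j * P i j = 0 := by
      rcases hcase with h | h <;>
      · have := hsplit i
        rw [h] at this
        linarith
    have h3 := (Finset.sum_eq_zero_iff_of_nonneg
      (fun k _ => mul_self_nonneg (P i k))).mp h2 j (Finset.mem_erase.mpr ⟨hj, Finset.mem_univ j⟩)
    exact mul_self_eq_zero.mp h3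
  refine ⟨hPsq, h0, ?_, fun i h1 => herase0 i (Or.inl h1), ?_⟩
  · intro i
    have hs : 0 ≤ ∑ j ∈ Finset.univ.erase i, P i j * P i j :=
      Finset.sum_nonneg fun k _ => mul_self_nonneg _
    have h2 : P i i * P i i ≤ P i i := by
      have h3 := hsplit i
      linarith
    nlinarith [h0 i, h2]
  · intro i hi j
    by_cases hj : j = i
    · rw [hj, hi]
    · exact herase0 i (Or.inr hi) j hj

lemma rank_conj {n : ℕ} (H A : Matrix (Fin n) (Fin n) ℝ) (hH : Hᵀ * H = 1) :
    (H * A * Hᵀ).rank = A.rank := by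
  have h1 : Hᵀ.det * H.det = 1 := by rw [← Matrix.det_mul, hH, Matrix.det_one]
  have hdetT : IsUnit Hᵀ.det := IsUnit.of_mul_eq_one _ h1
  have hdet : IsUnit H.det := by rwa [Matrix.det_transpose] at hdetT
  rw [Matrix.rank_mul_eq_left_of_isUnit_det Hᵀ (H * A) hdetT,
    Matrix.rank_mul_eq_right_of_isUnit_det H A hdet]

lemma trace_mul_diag {n : ℕ} (M : Matrix (Fin n) (Fin n) ℝ) (v : Fin n → ℝ) :
    (M * Matrix.diagonal v).trace = ∑ i, M i i * v i := by
  simp [Matrix.trace, Matrix.diag, Matrix.mul_diagonal]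

lemma trace_conj_form {n : ℕ} (H B D : Matrix (Fin n) (Fin n) ℝ) (hH : Hᵀ * H = 1) :
    ((H * D * Hᵀ) * B).trace = (D * (Hᵀ * B * H)).trace := by
  rw [show (H * D * Hᵀ) * B = H * (D * Hᵀ * B) from by simp only [mul_assoc],
    Matrix.trace_mul_comm H (D * Hᵀ * B)]
  simp only [mul_assoc]

lemma trace_PB_eq {n : ℕ} (H P B : Matrix (Fin n) (Fin n) ℝ) (hH : Hᵀ * H = 1) :
    ((Hᵀ * P * H) * (Hᵀ * B * H)).trace = (P * B).trace := by
  have hH' : H * Hᵀ = 1 := mul_eq_one_comm.mp hH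
  rw [show (Hᵀ * P * H) * (Hᵀ * B * H) = Hᵀ * (P * ((H * Hᵀ) * B) * H) from by
    simp only [mul_assoc], hH', one_mul,
    Matrix.trace_mul_comm Hᵀ (P * B * H),
    show P * B * H * Hᵀ = P * B * (H * Hᵀ) from by simp only [mul_assoc], hH', mul_one]

def cvec (p n : ℕ) : Fin n → ℝ := fun i => if (i : ℕ) < p then 1 else 0

lemma cvec01 {p n : ℕ} : ∀ i : Fin n, cvec p n i = 0 ∨ cvec p n i = 1 := by
  intro i; by_cases h : (i : ℕ) < p <;> simp [cvec, h]

lemma sum_filter_cvec {p n : ℕ} (μ : Fin n → ℝ) :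
    ∑ i ∈ Finset.univ.filter (fun i : Fin n => (i : ℕ) < p), μ i
      = ∑ i : Fin n, cvec p n i * μ i := by
  rw [Finset.sum_filter]
  exact Finset.sum_congr rfl fun i _ => by by_cases h : (i : ℕ) < p <;> simp [cvec, h]

lemma sum_cvec {p n : ℕ} (hpn : p ≤ n) : ∑ i : Fin n, cvec p n i = (p : ℝ) := by
  rw [show (fun i : Fin n => cvec p n i) = fun i : Fin n => if (i : ℕ) < p then (1:ℝ) else 0 from rfl]
  rw [Finset.sum_boole, card_lt_p hpn]

/-- Paper's Proposition 2 (characterization part): for a symmetric positive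
semidefinite `B` with eigenvalues `μ₁ ≥ … ≥ μ_n` (diagonalized by the
orthogonal matrix `H₀`), the maximum of `trace(Π B)` over rank-`p` orthogonal
projectors is `μ₁ + … + μ_p`, and the maximizers are exactly the orthogonal
projectors onto dominant `p`-dimensional eigenspaces of `B`. -/
theorem stmt11 {n p : ℕ} (hp : 1 ≤ p) (hpn : p ≤ n)
    (B : Matrix (Fin n) (Fin n) ℝ) (hB : B.PosSemidef)
    (μ : Fin n → ℝ) (hμ : Antitone μ)
    (H₀ : Matrix (Fin n) (Fin n) ℝ) (hH₀ : H₀ᵀ * H₀ = 1)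
    (hdiag : H₀ᵀ * B * H₀ = Matrix.diagonal μ) :
    IsGreatest
      {x : ℝ | ∃ P : Matrix (Fin n) (Fin n) ℝ,
        Pᵀ = P ∧ P * P = P ∧ P.rank = p ∧ x = (P * B).trace}
      (∑ i ∈ Finset.univ.filter (fun i : Fin n => (i : ℕ) < p), μ i)
    ∧ ∀ P : Matrix (Fin n) (Fin n) ℝ, Pᵀ = P → P * P = P → P.rank = p →
        ((P * B).trace = ∑ i ∈ Finset.univ.filter (fun i : Fin n => (i : ℕ) < p), μ i ↔
          ∃ H : Matrix (Fin n) (Fin n) ℝ, Hᵀ * H = 1 ∧ Hᵀ * B * H = Matrix.diagonal μ ∧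
            P = H * Matrix.diagonal (fun i : Fin n => if (i : ℕ) < p then (1 : ℝ) else 0) * Hᵀ) := by
  classical
  have hn1 : p - 1 < n := by omega
  have hH₀' : H₀ * H₀ᵀ = 1 := mul_eq_one_comm.mp hH₀
  have hcc : ∀ i : Fin n, cvec p n i * cvec p n i = cvec p n i := fun i => by
    rcases cvec01 (p := p) i with h | h <;> rw [h] <;> ring
  have hDD : Matrix.diagonal (cvec p n) * Matrix.diagonal (cvec p n)
      = Matrix.diagonal (cvec p n) := by
    rw [Matrix.diagonal_mul_diagonal]
    exact congrArg Matrix.diagonal (funext fun i => hcc i)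
  have hDT : (Matrix.diagonal (cvec p n))ᵀ = Matrix.diagonal (cvec p n) :=
    Matrix.diagonal_transpose _
  have hrankD : (Matrix.diagonal (cvec p n)).rank = p := by
    rw [Matrix.rank_diagonal]
    have hiff : ∀ i : Fin n, cvec p n i ≠ 0 ↔ (i : ℕ) < p := fun i => by
      by_cases h : (i : ℕ) < p <;> simp [cvec, h]
    rw [Fintype.card_congr (Equiv.subtypeEquivRight hiff), Fintype.card_subtype, card_lt_p hpn]
  have htrD : (Matrix.diagonal (cvec p n)).trace = (p : ℝ) := by
    rw [Matrix.trace_diagonal, sum_cvec hpn]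
  -- facts about the conjugated projector
  have qfacts : ∀ P : Matrix (Fin n) (Fin n) ℝ, Pᵀ = P → P * P = P → P.rank = p →
      ((H₀ᵀ * P * H₀)ᵀ = H₀ᵀ * P * H₀ ∧ (H₀ᵀ * P * H₀) * (H₀ᵀ * P * H₀) = H₀ᵀ * P * H₀) ∧
      (P * B).trace = ∑ i : Fin n, (H₀ᵀ * P * H₀) i i * μ i ∧
      (∑ i : Fin n, (H₀ᵀ * P * H₀) i i = (p : ℝ)) ∧
      (∀ i, 0 ≤ (H₀ᵀ * P * H₀) i i) ∧ (∀ i, (H₀ᵀ * P * H₀) i i ≤ 1) := by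
    intro P hsym hidem hrank
    have hQsym : (H₀ᵀ * P * H₀)ᵀ = H₀ᵀ * P * H₀ := by
      rw [Matrix.transpose_mul, Matrix.transpose_mul, Matrix.transpose_transpose, hsym]
      simp only [mul_assoc]
    have hQidem : (H₀ᵀ * P * H₀) * (H₀ᵀ * P * H₀) = H₀ᵀ * P * H₀ := by
      rw [show (H₀ᵀ * P * H₀) * (H₀ᵀ * P * H₀) = H₀ᵀ * (P * ((H₀ * H₀ᵀ) * P)) * H₀ from by
        simp only [mul_assoc], hH₀', one_mul, hidem]
    have hQrank : (H₀ᵀ * P * H₀).rank = p := by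
      rw [show H₀ᵀ * P * H₀ = H₀ᵀ * P * (H₀ᵀ)ᵀ from by rw [Matrix.transpose_transpose],
        rank_conj H₀ᵀ P (by rw [Matrix.transpose_transpose]; exact hH₀')]
      exact hrank
    have htrQ : (H₀ᵀ * P * H₀).trace = (p : ℝ) := by
      rw [trace_eq_rank_of_projector _ hQsym hQidem, hQrank]
    obtain ⟨hsq, hge0, hle1, hrow1, hrow0⟩ := projector_diag _ hQsym hQidem
    refine ⟨⟨hQsym, hQidem⟩, ?_, ?_, hge0, hle1⟩
    · have h1 := trace_PB_eq H₀ P B hH₀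
      rw [hdiag] at h1
      rw [← h1, trace_mul_diag]
    · rw [← htrQ]
      rfl
  constructor
  · constructor
    · -- membership: P₀ = H₀ D₀ H₀ᵀ
      refine ⟨H₀ * Matrix.diagonal (cvec p n) * H₀ᵀ, ?_, ?_, ?_, ?_⟩
      · rw [Matrix.transpose_mul, Matrix.transpose_mul, Matrix.transpose_transpose, hDT]
        simp only [mul_assoc]
      · rw [show (H₀ * Matrix.diagonal (cvec p n) * H₀ᵀ) * (H₀ * Matrix.diagonal (cvec p n) * H₀ᵀ)
            = H₀ * (Matrix.diagonal (cvec p n) * ((H₀ᵀ * H₀) * Matrix.diagonal (cvec p n))) * H₀ᵀ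
            from by simp only [mul_assoc], hH₀, one_mul, hDD]
      · rw [rank_conj H₀ _ hH₀]
        exact hrankD
      · rw [trace_conj_form H₀ B _ hH₀, hdiag, Matrix.diagonal_mul_diagonal,
          Matrix.trace_diagonal, sum_filter_cvec μ]
    · -- upper bound
      rintro x ⟨P, hsym, hidem, hrank, rfl⟩
      obtain ⟨⟨hQsym, hQidem⟩, htr, hsum, hge0, hle1⟩ := qfacts P hsym hidem hrank
      have hineq := (weight_ineq hp hpn μ hμ (fun i => (H₀ᵀ * P * H₀) i i) hge0 hle1 hsum).1
      rw [htr, sum_filter_cvec μ]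
      exact hineq
  · -- characterization of equality
    intro P hsym hidem hrank
    constructor
    · intro heq
      obtain ⟨⟨hQsym, hQidem⟩, htr, hsum, hge0, hle1⟩ := qfacts P hsym hidem hrank
      have heq2 : ∑ i : Fin n, (H₀ᵀ * P * H₀) i i * μ i
          = ∑ i : Fin n, (if (i : ℕ) < p then (1:ℝ) else 0) * μ i := by
        rw [← htr, heq, sum_filter_cvec μ]
        rfl
      have hzero := (weight_ineq hp hpn μ hμ (fun i => (H₀ᵀ * P * H₀) i i) hge0 hle1 hsum).2 heq2
      have hdiagQ : ∀ i, μ i ≠ μ ⟨p - 1, hn1⟩ → (H₀ᵀ * P * H₀) i i = cvec p n i := by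
        intro i hne
        rcases mul_eq_zero.mp (hzero i) with h | h
        · exact sub_eq_zero.mp h
        · exact absurd (sub_eq_zero.mp h) hne
      obtain ⟨_, _, _, hrow1, hrow0⟩ := projector_diag _ hQsym hQidem
      have hcross : ∀ i j, (μ i ≠ μ ⟨p - 1, hn1⟩ ∨ μ j ≠ μ ⟨p - 1, hn1⟩) →
          (H₀ᵀ * P * H₀) i j = Matrix.diagonal (cvec p n) i j := by
        intro i j hor
        by_cases hij : i = j
        · subst hij
          rw [Matrix.diagonal_apply_eq]
          rcases hor with h | h <;> exact hdiagQ i h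
        · rw [Matrix.diagonal_apply_ne _ hij]
          rcases hor with h | h
          · rcases cvec01 (p := p) i with h0 | h1
            · exact hrow0 i (by rw [hdiagQ i h, h0]) j
            · exact hrow1 i (by rw [hdiagQ i h, h1]) j (fun hji => hij hji.symm)
          · have hsQ : (H₀ᵀ * P * H₀) i j = (H₀ᵀ * P * H₀) j i :=
              congrFun (congrFun hQsym j) i
            rw [hsQ]
            rcases cvec01 (p := p) j with h0 | h1
            · exact hrow0 j (by rw [hdiagQ j h, h0]) i
            · exact hrow1 j (by rw [hdiagQ j h, h1]) i hij
      have htrQD : (H₀ᵀ * P * H₀).trace = (Matrix.diagonal (cvec p n)).trace := by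
        rw [htrD]
        rw [show (H₀ᵀ * P * H₀).trace = ∑ i : Fin n, (H₀ᵀ * P * H₀) i i from rfl, hsum]
      obtain ⟨U, hUo, hUμ, hQU⟩ := exists_orthogonal_conj μ (μ ⟨p - 1, hn1⟩) (cvec p n)
        (cvec01 (p := p)) (H₀ᵀ * P * H₀) hQsym hQidem hcross htrQD
      refine ⟨H₀ * U, ?_, ?_, ?_⟩
      · rw [Matrix.transpose_mul,
          show Uᵀ * H₀ᵀ * (H₀ * U) = Uᵀ * ((H₀ᵀ * H₀) * U) from by simp only [mul_assoc],
          hH₀, one_mul, hUo]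
      · rw [Matrix.transpose_mul,
          show Uᵀ * H₀ᵀ * B * (H₀ * U) = Uᵀ * (H₀ᵀ * B * H₀) * U from by simp only [mul_assoc],
          hdiag, hUμ]
      · show P = (H₀ * U) * Matrix.diagonal (cvec p n) * (H₀ * U)ᵀ
        have hPQ : P = H₀ * (H₀ᵀ * P * H₀) * H₀ᵀ := by
          rw [show H₀ * (H₀ᵀ * P * H₀) * H₀ᵀ = (H₀ * H₀ᵀ) * P * (H₀ * H₀ᵀ) from by
            simp only [mul_assoc], hH₀', one_mul, mul_one]
        rw [Matrix.transpose_mul]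
        conv_lhs => rw [hPQ, hQU]
        simp only [mul_assoc]
    · rintro ⟨H, hHo, hHd, hPH⟩
      rw [hPH, trace_conj_form H B _ hHo, hHd]
      show (Matrix.diagonal (cvec p n) * Matrix.diagonal μ).trace = _
      rw [Matrix.diagonal_mul_diagonal, Matrix.trace_diagonal, sum_filter_cvec μ]
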